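/- Let G be a finite simple graph on n vertices with minimum degree δ and average degree d̄ > 0, and let λ be the minimum eigenvalue of the adjacency matrix of G. Then the independence number satisfies α(G) ≤ −λ·n·(d̄ − λ) / (δ − λ)². -/

import Mathlib

open Finset Matrix SimpleGraph

lemma rayleigh_min_aux {n : Type*} [Fintype n] [DecidableEq n]
    (A : Matrix n n ℝ) (hA : A.IsHermitian) (lam : ℝ)
    (h : ∀ μ ∈ spectrum ℝ A, lam ≤ μ) (x : n → ℝ) :
    lam * (x ⬝ᵥ x) ≤ x ⬝ᵥ (A *ᵥ x) := by
  have halg : (algebraMap ℝ (Matrix n n ℝ)) lam = lam • (1 : Matrix n n ℝ) :=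
    Algebra.algebraMap_eq_smul_one lam
  set B : Matrix n n ℝ := A - algebraMap ℝ (Matrix n n ℝ) lam with hB
  have hBsym : B.IsHermitian := by
    refine hA.sub ?_
    rw [halg]
    simp [Matrix.IsHermitian, Matrix.conjTranspose_smul]
  have hev : ∀ i, 0 ≤ hBsym.eigenvalues i := by
    intro i
    have hmem : hBsym.eigenvalues i ∈ spectrum ℝ B := hBsym.eigenvalues_mem_spectrum_real i
    rw [← spectrum.sub_singleton_eq] at hmem
    obtain ⟨a, ha, b, hb, hab⟩ := hmem
    simp only [Set.mem_singleton_iff] at hb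
    subst hb
    simp only at hab
    have := h a ha
    linarith [hab]
  have hpsd : B.PosSemidef := hBsym.posSemidef_iff_eigenvalues_nonneg.mpr (fun i => hev i)
  have h2 := hpsd.dotProduct_mulVec_nonneg x
  have hBx : B *ᵥ x = A *ᵥ x - lam • x := by
    rw [hB, Matrix.sub_mulVec, halg, Matrix.smul_mulVec, Matrix.one_mulVec]
  rw [hBx] at h2
  simp only [star_trivial, dotProduct_sub, dotProduct_smul, smul_eq_mul] at h2
  linarith

set_option maxHeartbeats 1600000 in
theorem independence_number_ratio_bound
    {V : Type*} [Fintype V] [Nonempty V] [DecidableEq V]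
    (G : SimpleGraph V) [DecidableRel G.Adj]
    (δ : ℕ) (hδ : IsLeast (Set.range fun v : V => G.degree v) δ)
    (dbar : ℝ) (hdbar : dbar = (∑ v, (G.degree v : ℝ)) / Fintype.card V)
    (hdbar_pos : 0 < dbar)
    (lam : ℝ) (hlam : IsLeast (spectrum ℝ (G.adjMatrix ℝ)) lam)
    (α : ℕ)
    (hα : IsGreatest {c : ℕ | ∃ S : Finset V,
      (∀ u ∈ S, ∀ v ∈ S, ¬ G.Adj u v) ∧ S.card = c} α) :
    (α : ℝ) ≤ -lam * Fintype.card V * (dbar - lam) / (δ - lam) ^ 2 := by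
  classical
  set N : ℝ := (Fintype.card V : ℝ) with hNdef
  have hN : (0 : ℝ) < N := by
    rw [hNdef]
    exact_mod_cast Fintype.card_pos (α := V)
  set D : ℝ := ∑ v, (G.degree v : ℝ) with hDdef
  have hDN : D = dbar * N := by rw [hdbar]; field_simp
  have hD : 0 < D := by rw [hDN]; exact mul_pos hdbar_pos hN
  have hA : (G.adjMatrix ℝ).IsHermitian := by
    rw [Matrix.IsHermitian, Matrix.conjTranspose_eq_transpose_of_trivial]
    exact G.isSymm_adjMatrix
  have hray : ∀ x : V → ℝ, lam * (x ⬝ᵥ x) ≤ x ⬝ᵥ (G.adjMatrix ℝ *ᵥ x) :=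
    fun x => rayleigh_min_aux _ hA lam (fun μ hμ => hlam.2 hμ) x
  -- there is an edge, hence lam ≤ -1
  obtain ⟨v0, hv0⟩ : ∃ v, 0 < G.degree v := by
    by_contra h
    push_neg at h
    have : ∀ v, G.degree v = 0 := fun v => Nat.le_zero.mp (h v)
    have : D = 0 := by simp [hDdef, this]
    linarith
  obtain ⟨u0, hu0⟩ : ∃ u, G.Adj v0 u := by
    obtain ⟨u, hu⟩ := Finset.card_pos.mp hv0
    exact ⟨u, (G.mem_neighborFinset v0 u).mp hu⟩
  have hne : v0 ≠ u0 := G.ne_of_adj hu0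
  have hlamneg : lam ≤ -1 := by
    set y : V → ℝ := fun v => (if v = v0 then (1:ℝ) else 0) - (if v = u0 then 1 else 0) with hy
    have hdot : ∀ f : V → ℝ, y ⬝ᵥ f = f v0 - f u0 := by
      intro f
      simp only [dotProduct, hy, sub_mul, ite_mul, one_mul, zero_mul,
        Finset.sum_sub_distrib, Finset.sum_ite_eq', Finset.mem_univ, if_true]
    have hsum : ∀ t : Finset V, ∑ u ∈ t, y u =
        (if v0 ∈ t then (1:ℝ) else 0) - (if u0 ∈ t then 1 else 0) := by
      intro t
      simp only [hy, Finset.sum_sub_distrib, Finset.sum_ite_eq', Finset.mem_univ]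
    have hyy : y ⬝ᵥ y = 2 := by
      rw [hdot]
      simp only [hy]
      simp only [if_true, if_neg hne, if_neg (Ne.symm hne)]
      norm_num
    have hAy : y ⬝ᵥ (G.adjMatrix ℝ *ᵥ y) = -2 := by
      rw [hdot]
      simp only [adjMatrix_mulVec_apply, hsum, SimpleGraph.mem_neighborFinset]
      simp only [G.irrefl, if_false, hu0, hu0.symm, if_true]
      norm_num
    have := hray y
    rw [hyy, hAy] at this
    linarith
  -- the independent set
  obtain ⟨S, hSind, hScard⟩ := hα.1
  set a : ℝ := (α : ℝ) with hadef
  set o : V → ℝ := fun _ => (1:ℝ) with ho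
  set s : V → ℝ := fun v => if v ∈ S then (1:ℝ) else 0 with hs
  have hssum : ∑ v, s v = a := by
    rw [hs]
    simp only [Finset.sum_ite_mem, Finset.univ_inter, Finset.sum_const, nsmul_eq_mul, mul_one]
    rw [hScard]
  have hAo : ∀ v, (G.adjMatrix ℝ *ᵥ o) v = (G.degree v : ℝ) := by
    intro v
    rw [adjMatrix_mulVec_apply]
    simp only [ho]
    rw [Finset.sum_const, nsmul_eq_mul, mul_one, G.card_neighborFinset_eq_degree]
  have hoA : ∀ v, (o ᵥ* G.adjMatrix ℝ) v = (G.degree v : ℝ) := by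
    intro v
    rw [adjMatrix_vecMul_apply]
    simp only [ho]
    rw [Finset.sum_const, nsmul_eq_mul, mul_one, G.card_neighborFinset_eq_degree]
  set w : ℝ := ∑ v ∈ S, (G.degree v : ℝ) with hw
  have f1 : s ⬝ᵥ (G.adjMatrix ℝ *ᵥ s) = 0 := by
    simp only [dotProduct, adjMatrix_mulVec_apply]
    apply Finset.sum_eq_zero
    intro v _
    by_cases hv : v ∈ S
    · have hz : ∑ u ∈ G.neighborFinset v, s u = 0 := by
        apply Finset.sum_eq_zero
        intro u hu
        have hadj : G.Adj v u := (G.mem_neighborFinset v u).mp hu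
        have huS : u ∉ S := fun huS => hSind v hv u huS hadj
        simp [hs, huS]
      rw [hz, mul_zero]
    · simp [hs, hv]
  have f2 : s ⬝ᵥ (G.adjMatrix ℝ *ᵥ o) = w := by
    simp only [dotProduct, hAo, hs, ite_mul, one_mul, zero_mul]
    rw [Finset.sum_ite_mem, Finset.univ_inter]
  have f3 : o ⬝ᵥ (G.adjMatrix ℝ *ᵥ s) = w := by
    rw [Matrix.dotProduct_mulVec]
    simp only [dotProduct, hoA, hs, mul_ite, mul_one, mul_zero]
    rw [Finset.sum_ite_mem, Finset.univ_inter]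
  have f4 : o ⬝ᵥ (G.adjMatrix ℝ *ᵥ o) = D := by
    have hAo' := hAo
    simp only [ho] at hAo'
    simp only [dotProduct, hAo', ho, one_mul]
    rfl
  have g1 : s ⬝ᵥ s = a := by
    have : ∀ v, s v * s v = s v := by
      intro v; by_cases h : v ∈ S <;> simp [hs, h]
    simp only [dotProduct, this]
    exact hssum
  have g2 : s ⬝ᵥ o = a := by
    simp only [dotProduct, ho, mul_one]
    exact hssum
  have g3 : o ⬝ᵥ s = a := by
    simp only [dotProduct, ho, one_mul]
    exact hssum
  have g4 : o ⬝ᵥ o = N := by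
    simp [dotProduct, ho, hNdef]
  have key : ∀ c e : ℝ, lam * (c^2 * a + 2*c*e*a + e^2*N) ≤ 2*c*e*w + e^2*D := by
    intro c e
    have h := hray (c • s + e • o)
    simp only [Matrix.mulVec_add, Matrix.mulVec_smul, dotProduct_add,
      add_dotProduct, dotProduct_smul, smul_dotProduct,
      smul_eq_mul, f1, f2, f3, f4, g1, g2, g3, g4] at h
    nlinarith [h]
  -- degree bound
  have hδle : ∀ v : V, (δ : ℝ) ≤ (G.degree v : ℝ) := by
    intro v
    exact_mod_cast hδ.2 ⟨v, rfl⟩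
  have hδ0 : (0:ℝ) ≤ (δ:ℝ) := Nat.cast_nonneg δ
  have hwlb : a * δ ≤ w := by
    have : ∑ v ∈ S, (δ:ℝ) ≤ ∑ v ∈ S, (G.degree v : ℝ) :=
      Finset.sum_le_sum (fun v _ => hδle v)
    calc a * δ = ∑ v ∈ S, (δ:ℝ) := by
          rw [Finset.sum_const, nsmul_eq_mul, hScard]
      _ ≤ w := this
  have ha0 : 0 ≤ a := Nat.cast_nonneg α
  -- key polynomial inequality
  have hkey2 : a * ((δ:ℝ) - lam)^2 ≤ lam^2 * N - lam * D := by
    rcases eq_or_lt_of_le ha0 with h0 | hapos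
    · rw [← h0]
      nlinarith
    · have K := key (w - lam * a) (lam * a)
      have hLa : lam * a < 0 := mul_neg_of_neg_of_pos (by linarith) hapos
      have h1 : 0 ≤ lam * a * (w^2 - 2*lam*a*w + lam*a*D + lam^2*a^2 - lam^2*a*N) := by
        nlinarith [K]
      have hX : w^2 - 2*lam*a*w + lam*a*D + lam^2*a^2 - lam^2*a*N ≤ 0 := by
        by_contra hc
        push_neg at hc
        nlinarith [mul_neg_of_neg_of_pos hLa hc]
      have haδ : 0 ≤ a * δ := mul_nonneg ha0 hδ0
      have hw2 : (a*δ)*(a*δ) ≤ w*w := mul_self_le_mul_self haδ hwlb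
      have hmono : 0 ≤ (-2*lam*a) * (w - a*δ) := by
        apply mul_nonneg
        · nlinarith
        · linarith
      -- a^2δ^2 - 2 lam a^2 δ + lam a D + lam^2 a^2 - lam^2 a N ≤ 0
      have hX2 : a^2*δ^2 - 2*lam*a*(a*δ) + lam*a*D + lam^2*a^2 - lam^2*a*N ≤ 0 := by
        nlinarith [hX, hw2, hmono]
      -- divide by a
      by_contra hc
      push_neg at hc
      nlinarith [mul_lt_mul_of_pos_left hc hapos]
  -- conclude
  have hden : (0:ℝ) < ((δ:ℝ) - lam)^2 := by
    have : (0:ℝ) < (δ:ℝ) - lam := by linarith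
    positivity
  rw [le_div_iff₀ hden]
  have hrhs : -lam * N * (dbar - lam) = lam^2 * N - lam * D := by
    have hNne : N ≠ 0 := ne_of_gt hN
    rw [hdbar]
    field_simp
    ring
  rw [hrhs]
  exact hkey2
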